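/- Fix an integer N > 1, let S be a KdV subset with leading term A, and let a ∈ A. Then the mutation S[a] = {a+1−N} ∪ (S+1) is a KdV subset, and its leading term is ((A+1) ∪ {a+1−N}) \ {a+1}. -/

import Mathlib

/-- A subset `S ⊆ ℤ` is of virtual cardinal zero if both `S \ ℤ≥0` and `ℤ≥0 \ S`
are finite and have the same cardinality. -/
def VirtualCardZero (S : Set ℤ) : Prop :=
  (S \ {n : ℤ | 0 ≤ n}).Finite ∧ ({n : ℤ | 0 ≤ n} \ S).Finite ∧
    (S \ {n : ℤ | 0 ≤ n}).ncard = ({n : ℤ | 0 ≤ n} \ S).ncard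

/-- The shift `S + k = {s + k : s ∈ S}` of a set of integers. -/
def shiftSet (S : Set ℤ) (k : ℤ) : Set ℤ := (fun s => s + k) '' S

/-- A KdV subset (for a fixed `N`): a subset `S ⊆ ℤ` of virtual cardinal zero
such that `S + N ⊆ S`. -/
def IsKdV (N : ℕ) (S : Set ℤ) : Prop :=
  VirtualCardZero S ∧ shiftSet S N ⊆ S

/-- `A` is the leading term of the KdV subset `S`: `A` is an `N`-element set with
`S = A ∪ (S+N)` and `A ∩ (S+N) = ∅`. -/
def IsLeadingTerm (N : ℕ) (S : Set ℤ) (A : Finset ℤ) : Prop :=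
  A.card = N ∧ (↑A : Set ℤ) ∪ shiftSet S N = S ∧ (↑A : Set ℤ) ∩ shiftSet S N = ∅

/-- The mutation `S[a] = {a+1−N} ∪ (S+1)` of a KdV subset `S` at an element `a`
of its leading term. -/
def mutate (N : ℕ) (S : Set ℤ) (a : ℤ) : Set ℤ :=
  {a + 1 - (N : ℤ)} ∪ shiftSet S 1

lemma mem_shiftSet {S : Set ℤ} {k x : ℤ} : x ∈ shiftSet S k ↔ x - k ∈ S := by
  constructor
  · rintro ⟨s, hs, rfl⟩; simpa using hs
  · intro h; exact ⟨x - k, h, by ring⟩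

lemma shift_one_card {S : Set ℤ} (h : VirtualCardZero S) :
    (shiftSet S 1 \ {n : ℤ | 0 ≤ n}).Finite ∧
    ({n : ℤ | 0 ≤ n} \ shiftSet S 1).Finite ∧
    ({n : ℤ | 0 ≤ n} \ shiftSet S 1).ncard
      = (shiftSet S 1 \ {n : ℤ | 0 ≤ n}).ncard + 1 := by
  obtain ⟨hf1, hf2, hcard⟩ := h
  set P : Set ℤ := {n : ℤ | 0 ≤ n} with hP
  have e1 : shiftSet S 1 \ P = (fun s => s + 1) '' ((S \ P) \ {-1}) := by
    ext x
    simp only [Set.mem_diff, mem_shiftSet, Set.mem_image, Set.mem_singleton_iff,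
      hP, Set.mem_setOf_eq]
    constructor
    · rintro ⟨hx, hx0⟩
      exact ⟨x - 1, ⟨⟨hx, by omega⟩, by omega⟩, by ring⟩
    · rintro ⟨s, ⟨⟨hs, hs0⟩, hsne⟩, rfl⟩
      exact ⟨by simpa using hs, by omega⟩
  have e2 : P \ shiftSet S 1 = (fun s => s + 1) '' ((P \ S) ∪ ({-1} \ S)) := by
    ext x
    simp only [Set.mem_diff, mem_shiftSet, Set.mem_image, Set.mem_union,
      Set.mem_singleton_iff, hP, Set.mem_setOf_eq]
    constructor
    · rintro ⟨hx0, hx⟩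
      refine ⟨x - 1, ?_, by ring⟩
      by_cases hx1 : x = 0
      · right; exact ⟨by omega, hx⟩
      · left; exact ⟨by omega, hx⟩
    · rintro ⟨s, hs, rfl⟩
      rcases hs with ⟨hs0, hs⟩ | ⟨hs0, hs⟩
      · exact ⟨by omega, by simpa using hs⟩
      · exact ⟨by omega, by simpa using hs⟩
  have hinj : Function.Injective (fun s : ℤ => s + 1) := fun x y h => by simpa using h
  have hfin1 : (shiftSet S 1 \ P).Finite := by
    rw [e1]; exact (hf1.diff.image _)
  have hfin2 : (P \ shiftSet S 1).Finite := by
    rw [e2]; exact ((hf2.union (Set.finite_singleton (-1)).diff).image _)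
  have n1 : (shiftSet S 1 \ P).ncard = ((S \ P) \ {-1}).ncard := by
    rw [e1, Set.ncard_image_of_injective _ hinj]
  have n2 : (P \ shiftSet S 1).ncard = ((P \ S) ∪ ({-1} \ S)).ncard := by
    rw [e2, Set.ncard_image_of_injective _ hinj]
  refine ⟨hfin1, hfin2, ?_⟩
  rw [n1, n2]
  by_cases hm : (-1 : ℤ) ∈ S
  · have hsub : ({-1} \ S : Set ℤ) = ∅ := by
      rw [Set.diff_eq_empty]; simpa using hm
    have hmem : (-1 : ℤ) ∈ S \ P := ⟨hm, by simp [hP]⟩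
    have hpos : 0 < (S \ P).ncard := (Set.ncard_pos hf1).2 ⟨_, hmem⟩
    rw [hsub, Set.union_empty, Set.ncard_diff_singleton_of_mem hmem]
    omega
  · have hd1 : (S \ P) \ {-1} = S \ P := by
      rw [Set.diff_singleton_eq_self]; exact fun h => hm h.1
    have hd2 : ({-1} \ S : Set ℤ) = {-1} := by
      ext x; simp only [Set.mem_diff, Set.mem_singleton_iff]
      exact ⟨fun h => h.1, fun h => ⟨h, h ▸ hm⟩⟩
    have hnm : (-1 : ℤ) ∉ P \ S := fun h => by simp [hP] at h
    rw [hd1, hd2, Set.union_singleton, Set.ncard_insert_of_notMem hnm hf2]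
    omega

/-- Fix `N > 1`, let `S` be a KdV subset with leading term `A`, and
let `a ∈ A`.  Then the mutation `S[a] = {a+1−N} ∪ (S+1)` is a KdV subset, and its
leading term is `((A+1) ∪ {a+1−N}) \ {a+1}`. -/
theorem mutate_isKdV (N : ℕ) (hN : 1 < N) (S : Set ℤ) (hS : IsKdV N S)
    (A : Finset ℤ) (hA : IsLeadingTerm N S A) (a : ℤ) (ha : a ∈ A) :
    IsKdV N (mutate N S a) ∧
      IsLeadingTerm N (mutate N S a)
        ((A.image (fun x => x + 1) ∪ {a + 1 - (N : ℤ)}) \ {a + 1}) := by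
  obtain ⟨hvc, hshift⟩ := hS
  obtain ⟨hcardA, hunion, hinter⟩ := hA
  set c : ℤ := a + 1 - (N : ℤ) with hc
  set P : Set ℤ := {n : ℤ | 0 ≤ n} with hP
  -- basic membership facts
  have hiff : ∀ x : ℤ, x ∈ S ↔ (x ∈ (A : Set ℤ) ∨ x - N ∈ S) := by
    intro x
    conv_lhs => rw [← hunion]
    simp [Set.mem_union, mem_shiftSet]
  have hdis : ∀ x : ℤ, x ∈ (A : Set ℤ) → x - N ∈ S → False := by
    intro x hx h
    have hmem : x ∈ (↑A : Set ℤ) ∩ shiftSet S N := ⟨hx, mem_shiftSet.2 h⟩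
    rw [hinter] at hmem
    exact hmem
  have haS : a ∈ S := (hiff a).2 (Or.inl (by exact_mod_cast ha))
  have haNS : a - N ∉ S := fun h => hdis a (by exact_mod_cast ha) h
  have ha2NS : a - 2 * N ∉ S := by
    intro h
    exact haNS (hshift ⟨a - 2 * N, h, by ring⟩)
  have haNA : a - N ∉ A := fun h => haNS ((hiff (a - N)).2 (Or.inl (by exact_mod_cast h)))
  -- membership in the mutation
  have hmut : ∀ x : ℤ, x ∈ mutate N S a ↔ x = c ∨ x - 1 ∈ S := by
    intro x
    simp [mutate, mem_shiftSet, ← hc]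
  -- the mutation is closed under shift by N
  have hsub' : shiftSet (mutate N S a) N ⊆ mutate N S a := by
    intro x hx
    rw [mem_shiftSet, hmut] at hx
    rw [hmut]
    rcases hx with hx | hx
    · right
      have hxa : x - 1 = a := by omega
      rwa [hxa]
    · right
      exact hshift ⟨x - N - 1, hx, by ring⟩
  -- virtual cardinal zero for the mutation
  obtain ⟨hT1, hT2, hTc⟩ := shift_one_card hvc
  rw [← hP] at hT1 hT2 hTc
  set T : Set ℤ := shiftSet S 1 with hT
  have hcT : c ∉ T := by
    rw [hT, mem_shiftSet]
    intro h
    exact haNS (by rwa [show c - 1 = a - (N : ℤ) by omega] at h)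
  have hins : mutate N S a = insert c T := by
    rw [mutate, ← hc, ← hT, Set.singleton_union]
  have hvc' : VirtualCardZero (mutate N S a) := by
    by_cases hge : (0 : ℤ) ≤ c
    · have eq1 : mutate N S a \ P = T \ P := by
        rw [hins]
        ext x
        simp only [Set.mem_diff, Set.mem_insert_iff, Set.mem_setOf_eq, hP]
        constructor
        · rintro ⟨hx | hx, h0⟩
          · exact absurd (hx ▸ hge) h0
          · exact ⟨hx, h0⟩
        · rintro ⟨hx, h0⟩; exact ⟨Or.inr hx, h0⟩
      have eq2 : P \ mutate N S a = (P \ T) \ {c} := by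
        rw [hins]
        ext x
        simp only [Set.mem_diff, Set.mem_insert_iff, Set.mem_setOf_eq,
          Set.mem_singleton_iff, hP]
        tauto
      have hcm : c ∈ P \ T := ⟨hge, hcT⟩
      have hpos : 0 < (P \ T).ncard := (Set.ncard_pos hT2).2 ⟨_, hcm⟩
      refine ⟨by rw [eq1]; exact hT1, by rw [eq2]; exact hT2.diff, ?_⟩
      rw [eq1, eq2, Set.ncard_diff_singleton_of_mem hcm, hTc]
      omega
    · have eq1 : mutate N S a \ P = insert c (T \ P) := by
        rw [hins]
        ext x
        simp only [Set.mem_diff, Set.mem_insert_iff, Set.mem_setOf_eq, hP]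
        constructor
        · rintro ⟨hx | hx, h0⟩
          · exact Or.inl hx
          · exact Or.inr ⟨hx, h0⟩
        · rintro (rfl | ⟨hx, h0⟩)
          · exact ⟨Or.inl rfl, hge⟩
          · exact ⟨Or.inr hx, h0⟩
      have eq2 : P \ mutate N S a = P \ T := by
        rw [hins]
        ext x
        simp only [Set.mem_diff, Set.mem_insert_iff, Set.mem_setOf_eq, hP]
        constructor
        · rintro ⟨h0, hx⟩; exact ⟨h0, fun h => hx (Or.inr h)⟩
        · rintro ⟨h0, hx⟩
          refine ⟨h0, ?_⟩
          rintro (rfl | h)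
          · exact hge h0
          · exact hx h
      have hcm : c ∉ T \ P := fun h => hcT h.1
      refine ⟨by rw [eq1]; exact hT1.insert _, by rw [eq2]; exact hT2, ?_⟩
      rw [eq1, eq2, Set.ncard_insert_of_notMem hcm hT1, hTc]
  -- the leading term
  have himg : (A.image (fun x => x + 1)).card = N := by
    rw [Finset.card_image_of_injective _ (fun x y h => by omega), hcardA]
  have hcimg : c ∉ A.image (fun x => x + 1) := by
    simp only [Finset.mem_image]
    rintro ⟨x, hx, hxe⟩
    have hxa : x = a - N := by omega
    exact haNA (hxa ▸ hx)
  have haimg : a + 1 ∈ A.image (fun x => x + 1) := Finset.mem_image_of_mem _ ha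
  have hsub1 : ({a + 1} : Finset ℤ) ⊆ A.image (fun x => x + 1) ∪ {c} := by
    simp only [Finset.singleton_subset_iff, Finset.mem_union]
    exact Or.inl haimg
  have hdisj : Disjoint (A.image (fun x => x + 1)) ({c} : Finset ℤ) :=
    Finset.disjoint_singleton_right.2 hcimg
  have hcard' : ((A.image (fun x => x + 1) ∪ {c}) \ ({a + 1} : Finset ℤ)).card = N := by
    rw [Finset.card_sdiff_of_subset hsub1, Finset.card_union_of_disjoint hdisj, himg,
      Finset.card_singleton, Finset.card_singleton]
    omega
  have hA' : ∀ x : ℤ,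
      x ∈ (↑((A.image (fun y => y + 1) ∪ {c}) \ ({a + 1} : Finset ℤ)) : Set ℤ) ↔
      ((x - 1 ∈ A ∨ x = c) ∧ x ≠ a + 1) := by
    intro x
    simp only [Finset.coe_sdiff, Finset.coe_union, Finset.coe_image, Finset.coe_singleton,
      Set.mem_diff, Set.mem_union, Set.mem_image, Set.mem_singleton_iff, Finset.mem_coe]
    constructor
    · rintro ⟨h1 | h2, h3⟩
      · obtain ⟨y, hy, rfl⟩ := h1
        exact ⟨Or.inl (by simpa using hy), h3⟩
      · exact ⟨Or.inr h2, h3⟩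
    · rintro ⟨h1 | h2, h3⟩
      · exact ⟨Or.inl ⟨x - 1, h1, by ring⟩, h3⟩
      · exact ⟨Or.inr h2, h3⟩
  have hu : (↑((A.image (fun y => y + 1) ∪ {c}) \ ({a + 1} : Finset ℤ)) : Set ℤ) ∪
      shiftSet (mutate N S a) N = mutate N S a := by
    ext x
    rw [Set.mem_union, hA' x, hmut x, mem_shiftSet, hmut (x - N)]
    constructor
    · rintro (⟨h1 | rfl, h3⟩ | (h4 | h5))
      · right; exact (hiff (x - 1)).2 (Or.inl (by exact_mod_cast h1))
      · left; rfl
      · right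
        have hxa : x - 1 = a := by omega
        rwa [hxa]
      · right
        exact hshift ⟨x - N - 1, h5, by ring⟩
    · rintro (rfl | h)
      · left; exact ⟨Or.inr rfl, by omega⟩
      · rcases (hiff (x - 1)).1 h with hA1 | hS1
        · by_cases hxa : x = a + 1
          · right; left; omega
          · left; exact ⟨Or.inl (by exact_mod_cast hA1), hxa⟩
        · right; right
          rwa [show x - (N : ℤ) - 1 = x - 1 - N by ring]
  have hi : (↑((A.image (fun y => y + 1) ∪ {c}) \ ({a + 1} : Finset ℤ)) : Set ℤ) ∩
      shiftSet (mutate N S a) N = ∅ := by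
    ext x
    simp only [Set.mem_inter_iff, Set.mem_empty_iff_false, iff_false]
    rw [hA' x, mem_shiftSet, hmut (x - N)]
    rintro ⟨⟨h1 | rfl, h3⟩, h4 | h5⟩
    · exact h3 (by omega)
    · exact hdis (x - 1) (by exact_mod_cast h1)
        (by rwa [show x - 1 - (N : ℤ) = x - N - 1 by ring])
    · exact h3 (by omega)
    · exact ha2NS (by rwa [show c - (N : ℤ) - 1 = a - 2 * N by omega] at h5)
  exact ⟨⟨hvc', hsub'⟩, hcard', hu, hi⟩
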